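/- For every fixed x ∈ ℝ, the rescaled prior density of the MVP-IBP coefficients satisfies lim_{p→∞} ((α+p)/α) · τ_p⁻¹ φ((x − μ_p)/τ_p) = exp(−x − 1/2). -/

import Mathlib

open MeasureTheory Real Filter
open Topology

/-- The standard normal density `φ(x) = (2π)^{-1/2} exp(-x²/2)`. -/
noncomputable def stdNormalPDF (x : ℝ) : ℝ :=
  (Real.sqrt (2 * Real.pi))⁻¹ * Real.exp (-x ^ 2 / 2)

/-- The standard normal CDF `Φ(x) = ∫_{-∞}^x φ(t) dt`. -/
noncomputable def stdNormalCDF (x : ℝ) : ℝ :=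
  ∫ t in Set.Iio x, stdNormalPDF t

/-- `τ_p = √(2 log p)`. -/
noncomputable def tauP (p : ℕ) : ℝ := Real.sqrt (2 * Real.log p)

/-- The density of `N(μ_p, τ_p²)` at `x`, namely `τ_p⁻¹ φ((x - μ_p)/τ_p)`. -/
noncomputable def mvpDens (μ : ℕ → ℝ) (p : ℕ) (x : ℝ) : ℝ :=
  (tauP p)⁻¹ * stdNormalPDF ((x - μ p) / tauP p)

lemma sqrt2pi_pos : 0 < Real.sqrt (2 * Real.pi) :=
  Real.sqrt_pos.2 (by positivity)

lemma pdf_pos (x : ℝ) : 0 < stdNormalPDF x := by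
  unfold stdNormalPDF
  positivity

lemma pdf_continuous : Continuous stdNormalPDF := by
  unfold stdNormalPDF
  continuity

lemma integrable_pdf : Integrable stdNormalPDF := by
  have h0 : Integrable (fun x : ℝ => Real.exp (-(1/2 : ℝ) * x ^ 2)) := integrable_exp_neg_mul_sq (by norm_num)
  have h := h0.const_mul (Real.sqrt (2 * Real.pi))⁻¹
  refine h.congr (Eventually.of_forall fun x => ?_)
  unfold stdNormalPDF
  ring_nf

lemma integrable_mul_pdf : Integrable (fun t : ℝ => t * stdNormalPDF t) := by
  have h0 : Integrable (fun x : ℝ => x * Real.exp (-(1/2 : ℝ) * x ^ 2)) := integrable_mul_exp_neg_mul_sq (by norm_num)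
  have h := h0.const_mul (Real.sqrt (2 * Real.pi))⁻¹
  refine h.congr (Eventually.of_forall fun x => ?_)
  unfold stdNormalPDF
  ring_nf

lemma hasDerivAt_pdf (x : ℝ) :
    HasDerivAt stdNormalPDF (-x * stdNormalPDF x) x := by
  have h1 : HasDerivAt (fun y : ℝ => -y ^ 2 / 2) (-x) x := by
    have h := ((hasDerivAt_pow 2 x).neg.div_const 2)
    refine h.congr_deriv ?_
    push_cast; ring
  have h2 := (h1.exp).const_mul (Real.sqrt (2 * Real.pi))⁻¹
  refine h2.congr_deriv ?_
  unfold stdNormalPDF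
  ring

lemma pdf_tendsto_atBot : Tendsto stdNormalPDF atBot (𝓝 0) := by
  have h1 : Tendsto (fun t : ℝ => -t ^ 2 / 2) atBot atBot := by
    have hp : Tendsto (fun x : ℝ => x ^ 2) atTop atTop :=
      tendsto_pow_atTop (by norm_num)
    have hsq : Tendsto (fun t : ℝ => t ^ 2) atBot atTop :=
      (hp.comp tendsto_neg_atBot_atTop).congr fun t => by simp [neg_pow]
    have h2 : Tendsto (fun t : ℝ => -t ^ 2) atBot atBot := tendsto_neg_atTop_atBot.comp hsq
    exact h2.atBot_div_const two_pos
  have h2 := (Real.tendsto_exp_atBot.comp h1).const_mul (Real.sqrt (2 * Real.pi))⁻¹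
  simp only [Function.comp_def, mul_zero] at h2
  exact h2

lemma cdf_eq_Iic (z : ℝ) : stdNormalCDF z = ∫ t in Set.Iic z, stdNormalPDF t :=
  (MeasureTheory.integral_Iic_eq_integral_Iio).symm

lemma integral_mul_pdf_Iic (z : ℝ) :
    ∫ t in Set.Iic z, t * stdNormalPDF t = -stdNormalPDF z := by
  have h := MeasureTheory.integral_Iic_of_hasDerivAt_of_tendsto'
    (f := fun t => -stdNormalPDF t) (f' := fun t => t * stdNormalPDF t) (a := z)
    (fun t _ => by have := (hasDerivAt_pdf t).neg; simp only [neg_mul, neg_neg] at this; exact this)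
    (integrable_mul_pdf.integrableOn) (by simpa using pdf_tendsto_atBot.neg)
  simpa using h

lemma cdf_le (z : ℝ) (hz : z < 0) : stdNormalCDF z ≤ stdNormalPDF z / (-z) := by
  rw [cdf_eq_Iic]
  have hmono : ∫ t in Set.Iic z, stdNormalPDF t ≤ ∫ t in Set.Iic z, (t / z) * stdNormalPDF t := by
    refine MeasureTheory.setIntegral_mono_on integrable_pdf.integrableOn ?_ measurableSet_Iic ?_
    · have : Integrable (fun t : ℝ => z⁻¹ * (t * stdNormalPDF t)) := integrable_mul_pdf.const_mul _
      exact (this.congr (Eventually.of_forall fun t => by ring)).integrableOn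
    · intro t ht
      have ht' : t ≤ z := ht
      have h1 : 1 ≤ t / z := by
        rw [le_div_iff_of_neg hz]
        simpa using ht'
      nlinarith [pdf_pos t]
  have heq : ∫ t in Set.Iic z, (t / z) * stdNormalPDF t = stdNormalPDF z / (-z) := by
    have : ∫ t in Set.Iic z, (t / z) * stdNormalPDF t
        = z⁻¹ * ∫ t in Set.Iic z, t * stdNormalPDF t := by
      rw [← MeasureTheory.integral_const_mul]
      exact MeasureTheory.setIntegral_congr_fun measurableSet_Iic fun t _ => by ring
    rw [this, integral_mul_pdf_Iic]
    ring
  linarith [hmono, heq.le, heq.ge]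
lemma hasDerivAt_hfun (t : ℝ) :
    HasDerivAt (fun s : ℝ => -s * stdNormalPDF s / (1 + s ^ 2))
      (stdNormalPDF t * (1 - 2 / (1 + t ^ 2) ^ 2)) t := by
  have hden : (1 : ℝ) + t ^ 2 ≠ 0 := by positivity
  have hnum : HasDerivAt (fun s : ℝ => -s * stdNormalPDF s)
      (-1 * stdNormalPDF t + -t * (-t * stdNormalPDF t)) t :=
    ((hasDerivAt_id t).neg).mul (hasDerivAt_pdf t)
  have hden' : HasDerivAt (fun s : ℝ => 1 + s ^ 2) (2 * t) t := by
    have h := (hasDerivAt_pow 2 t).const_add 1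
    refine h.congr_deriv ?_
    push_cast; ring
  have h := hnum.div hden' hden
  refine h.congr_deriv ?_
  field_simp
  ring

lemma hfun_tendsto_atBot :
    Tendsto (fun s : ℝ => -s * stdNormalPDF s / (1 + s ^ 2)) atBot (𝓝 0) := by
  have h1 : Tendsto (fun s : ℝ => -s / (1 + s ^ 2)) atBot (𝓝 0) := by
    have hd : Tendsto (fun s : ℝ => (1 + s ^ 2) / -s) atBot atTop := by
      apply tendsto_atTop_mono' _ _ tendsto_neg_atBot_atTop
      filter_upwards [eventually_le_atBot (-1 : ℝ)] with s hs
      have hs' : (1 : ℝ) ≤ -s := by linarith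
      rw [le_div_iff₀ (by linarith)]
      nlinarith
    have := hd.inv_tendsto_atTop
    refine this.congr fun s => ?_
    simp [one_div]
  have h2 := h1.mul pdf_tendsto_atBot
  refine (by simpa using h2 : Tendsto (fun s : ℝ => -s / (1 + s ^ 2) * stdNormalPDF s) atBot (𝓝 0)).congr fun s => by ring

lemma integrable_hderiv : Integrable (fun t : ℝ => stdNormalPDF t * (1 - 2 / (1 + t ^ 2) ^ 2)) := by
  refine Integrable.mono' integrable_pdf ?_ (Eventually.of_forall fun t => ?_)
  · exact (pdf_continuous.mul ((continuous_const.sub (continuous_const.div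
      (by continuity) fun t => by positivity)))).aestronglyMeasurable
  · rw [Real.norm_eq_abs, abs_mul, abs_of_pos (pdf_pos t)]
    have h1 : 0 < (1 + t ^ 2) ^ 2 := by positivity
    have h2 : (1:ℝ) ≤ (1 + t ^ 2) ^ 2 := by nlinarith
    have : |1 - 2 / (1 + t ^ 2) ^ 2| ≤ 1 := by
      rw [abs_le]
      constructor
      · have : 2 / (1 + t ^ 2) ^ 2 ≤ 2 := by
          rw [div_le_iff₀ h1]; nlinarith
        linarith
      · have : 0 ≤ 2 / (1 + t ^ 2) ^ 2 := by positivity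
        linarith
    nlinarith [pdf_pos t, abs_nonneg (1 - 2 / (1 + t ^ 2) ^ 2)]

lemma cdf_ge (z : ℝ) : -z * stdNormalPDF z / (1 + z ^ 2) ≤ stdNormalCDF z := by
  rw [cdf_eq_Iic]
  have hftc : ∫ t in Set.Iic z, stdNormalPDF t * (1 - 2 / (1 + t ^ 2) ^ 2)
      = -z * stdNormalPDF z / (1 + z ^ 2) := by
    have h := MeasureTheory.integral_Iic_of_hasDerivAt_of_tendsto'
      (f := fun s => -s * stdNormalPDF s / (1 + s ^ 2))
      (f' := fun t => stdNormalPDF t * (1 - 2 / (1 + t ^ 2) ^ 2)) (a := z)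
      (fun t _ => hasDerivAt_hfun t) integrable_hderiv.integrableOn hfun_tendsto_atBot
    simpa using h
  rw [← hftc]
  refine MeasureTheory.setIntegral_mono_on integrable_hderiv.integrableOn
    integrable_pdf.integrableOn measurableSet_Iic fun t _ => ?_
  have h0 : 0 < 2 / (1 + t ^ 2) ^ 2 := by positivity
  nlinarith [pdf_pos t]

lemma cdf_mono : Monotone stdNormalCDF := by
  intro a b hab
  rw [cdf_eq_Iic, cdf_eq_Iic]
  refine MeasureTheory.setIntegral_mono_set integrable_pdf.integrableOn
    (Eventually.of_forall fun t => (pdf_pos t).le) (HasSubset.Subset.eventuallyLE (Set.Iic_subset_Iic.2 hab))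

lemma cdf_pos (z : ℝ) : 0 < stdNormalCDF z := by
  have hm : min z (-1) ≤ z := min_le_left _ _
  have hneg : min z (-1) < 0 := lt_of_le_of_lt (min_le_right _ _) (by norm_num)
  calc (0:ℝ) < -(min z (-1)) * stdNormalPDF (min z (-1)) / (1 + (min z (-1)) ^ 2) := by
        exact div_pos (mul_pos (by linarith) (pdf_pos _)) (by positivity)
    _ ≤ stdNormalCDF (min z (-1)) := cdf_ge _
    _ ≤ stdNormalCDF z := cdf_mono hm
lemma sq_tendsto_atBot_atTop : Tendsto (fun t : ℝ => t ^ 2) atBot atTop := by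
  have hp : Tendsto (fun x : ℝ => x ^ 2) atTop atTop := tendsto_pow_atTop (by norm_num)
  exact (hp.comp tendsto_neg_atBot_atTop).congr fun t => by simp [neg_pow]

lemma mills_tendsto {z : ℕ → ℝ} (hz : Tendsto z atTop atBot) :
    Tendsto (fun p => stdNormalPDF (z p) / (-z p * stdNormalCDF (z p))) atTop (𝓝 1) := by
  have hzle : ∀ᶠ p in atTop, z p ≤ -1 := hz.eventually (eventually_le_atBot (-1))
  have hR : Tendsto (fun p => -z p * stdNormalCDF (z p) / stdNormalPDF (z p)) atTop (𝓝 1) := by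
    have hlow : Tendsto (fun p => (z p) ^ 2 / (1 + (z p) ^ 2)) atTop (𝓝 1) := by
      have hsq : Tendsto (fun p => (z p) ^ 2) atTop atTop := sq_tendsto_atBot_atTop.comp hz
      have h1 : Tendsto (fun p => 1 + (z p) ^ 2) atTop atTop :=
        tendsto_atTop_add_const_left _ _ hsq
      have h2 : Tendsto (fun p => 1 - (1 + (z p) ^ 2)⁻¹) atTop (𝓝 1) := by
        simpa using (tendsto_const_nhds (x := (1:ℝ))).sub h1.inv_tendsto_atTop
      refine h2.congr fun p => ?_
      have hne : (1 : ℝ) + (z p) ^ 2 ≠ 0 := by positivity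
      field_simp
      ring
    refine tendsto_of_tendsto_of_tendsto_of_le_of_le' hlow tendsto_const_nhds ?_ ?_
    · filter_upwards [hzle] with p hp
      have hz0 : z p < 0 := by linarith
      have hpdf := pdf_pos (z p)
      have h := cdf_ge (z p)
      rw [div_le_iff₀ (by positivity : (0:ℝ) < 1 + z p ^ 2)] at h
      rw [div_le_div_iff₀ (by positivity) hpdf]
      nlinarith [mul_le_mul_of_nonneg_left h (by linarith : (0:ℝ) ≤ -z p)]
    · filter_upwards [hzle] with p hp
      have hz0 : z p < 0 := by linarith
      have hpdf := pdf_pos (z p)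
      have h := cdf_le (z p) hz0
      rw [div_le_one hpdf]
      rw [le_div_iff₀ (by linarith : (0:ℝ) < -z p)] at h
      linarith
  have := hR.inv₀ (by norm_num)
  simp only [inv_one] at this
  refine this.congr fun p => ?_
  rw [inv_div]
lemma log_div_self_tendsto : Tendsto (fun x : ℝ => Real.log x / x) atTop (𝓝 0) :=
  Real.isLittleO_log_id_atTop.tendsto_div_nhds_zero

lemma mvp_alg (A B C T Z c : ℝ) (hA : A ≠ 0) (hB : B ≠ 0) (hC : C ≠ 0) (hT : T ≠ 0)
    (hZ : Z ≠ 0) (hc : c ≠ 0) :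
    A / B * -(Z / T) * (c⁻¹ * A⁻¹ / (-Z * C)) = C⁻¹ * (T⁻¹ * (c⁻¹ * B⁻¹)) := by
  field_simp

/-- For every fixed `x ∈ ℝ`, the rescaled MVP-IBP prior density satisfies
`lim_{p→∞} ((α+p)/α) τ_p⁻¹ φ((x - μ_p)/τ_p) = exp(-x - 1/2)`. -/
theorem mvpIBP_rescaled_density_limit (α : ℝ) (hα : 0 < α) (μ : ℕ → ℝ)
    (hμ : ∀ p : ℕ, 2 ≤ p →
      stdNormalCDF (μ p / Real.sqrt (1 + tauP p ^ 2)) = α / (α + p))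
    (x : ℝ) :
    Filter.Tendsto (fun p : ℕ => ((α + p) / α) * mvpDens μ p x)
      Filter.atTop (nhds (Real.exp (-x - 1 / 2))) := by
  set σ : ℕ → ℝ := fun p => Real.sqrt (1 + tauP p ^ 2) with hσdef
  set z : ℕ → ℝ := fun p => μ p / σ p with hzdef
  have hσpos : ∀ p, 0 < σ p := fun p => Real.sqrt_pos.2 (by positivity)
  have hσsq : ∀ p, σ p ^ 2 = 1 + tauP p ^ 2 := fun p => Real.sq_sqrt (by positivity)
  have hμz : ∀ p, μ p = z p * σ p := fun p => by
    rw [hzdef]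
    field_simp
    exact (mul_div_cancel_right₀ _ (hσpos p).ne').symm
  have hτpos : ∀ p : ℕ, 2 ≤ p → 0 < tauP p := by
    intro p hp
    have h1 : (1:ℝ) < p := by exact_mod_cast Nat.lt_of_lt_of_le one_lt_two hp
    exact Real.sqrt_pos.2 (mul_pos two_pos (Real.log_pos h1))
  have hτsq : ∀ p : ℕ, 2 ≤ p → tauP p ^ 2 = 2 * Real.log p := by
    intro p hp
    have h1 : (1:ℝ) < p := by exact_mod_cast Nat.lt_of_lt_of_le one_lt_two hp
    refine Real.sq_sqrt ?_
    have := Real.log_pos h1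
    linarith
  have hαp : ∀ p : ℕ, (0:ℝ) < α + p := fun p => by positivity
  have hΦ : ∀ p : ℕ, 2 ≤ p → stdNormalCDF (z p) = α / (α + p) := fun p hp => hμ p hp
  have hratio_top : Tendsto (fun p : ℕ => (α + p) / α) atTop atTop := by
    apply Tendsto.atTop_div_const hα
    exact tendsto_atTop_add_const_left _ _ tendsto_natCast_atTop_atTop
  have hzero : Tendsto (fun p : ℕ => α / (α + p)) atTop (𝓝 0) := by
    have h := hratio_top.inv_tendsto_atTop
    refine h.congr fun p => ?_
    simp only [Pi.inv_apply, inv_div]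
  have hz_bot : Tendsto z atTop atBot := by
    rw [tendsto_atBot]
    intro M
    have hMpos := cdf_pos M
    filter_upwards [hzero.eventually_lt_const hMpos, eventually_ge_atTop 2] with p h1 h2
    by_contra hcon
    push_neg at hcon
    have hmono := cdf_mono hcon.le
    rw [hΦ p h2] at hmono
    linarith
  set L : ℕ → ℝ := fun p => Real.log ((α + p) / α) with hLdef
  have hL_top : Tendsto L atTop atTop := Real.tendsto_log_atTop.comp hratio_top
  have hlogp_top : Tendsto (fun p : ℕ => Real.log p) atTop atTop :=
    Real.tendsto_log_atTop.comp tendsto_natCast_atTop_atTop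
  have hexpL : ∀ p : ℕ, Real.exp (-(L p)) = α / (α + p) := by
    intro p
    show Real.exp (-Real.log ((α + (p:ℝ)) / α)) = _
    rw [← Real.log_inv, Real.exp_log (inv_pos.2 (div_pos (hαp p) hα)), inv_div]
  have hLdiv : Tendsto (fun p => L p / Real.log p) atTop (𝓝 1) := by
    have hnum : Tendsto (fun p : ℕ => Real.log (1 + α / p) - Real.log α) atTop
        (𝓝 (0 - Real.log α)) := by
      have h0 : Tendsto (fun p : ℕ => 1 + α / p) atTop (𝓝 1) := by
        have hd : Tendsto (fun p : ℕ => α / p) atTop (𝓝 0) :=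
          tendsto_const_nhds.div_atTop tendsto_natCast_atTop_atTop
        simpa using (tendsto_const_nhds (x := (1:ℝ))).add hd
      have h1 : Tendsto (fun p : ℕ => Real.log (1 + α / p)) atTop (𝓝 (Real.log 1)) :=
        (Real.continuousAt_log one_ne_zero).tendsto.comp h0
      rw [Real.log_one] at h1
      exact h1.sub tendsto_const_nhds
    have hfrac : Tendsto (fun p : ℕ => (Real.log (1 + α / p) - Real.log α) / Real.log p)
        atTop (𝓝 0) := hnum.div_atTop hlogp_top
    have hsum : Tendsto (fun p : ℕ => 1 + (Real.log (1 + α / p) - Real.log α) / Real.log p)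
        atTop (𝓝 1) := by simpa using (tendsto_const_nhds (x := (1:ℝ))).add hfrac
    refine hsum.congr' ?_
    filter_upwards [eventually_ge_atTop 2] with p hp
    have hp1 : (1:ℝ) < p := by exact_mod_cast Nat.lt_of_lt_of_le one_lt_two hp
    have hppos : (0:ℝ) < p := by linarith
    have hlogp : 0 < Real.log p := Real.log_pos hp1
    have h1ap : (0:ℝ) < 1 + α / p := by
      have : (0:ℝ) ≤ α / p := div_nonneg hα.le hppos.le
      linarith
    have hkey : L p = Real.log p + (Real.log (1 + α / p) - Real.log α) := by
      show Real.log ((α + (p:ℝ)) / α) = _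
      have heq : (α + (p:ℝ)) / α = p * (1 + α / p) / α := by field_simp; ring
      rw [heq, Real.log_div (by positivity) (ne_of_gt hα),
        Real.log_mul (ne_of_gt hppos) (ne_of_gt h1ap)]
      ring
    rw [hkey, add_div, div_self (ne_of_gt hlogp)]
  have hzle : ∀ᶠ p in atTop, z p ≤ -1 := hz_bot.eventually (eventually_le_atBot (-1))
  have hL1 : ∀ᶠ p in atTop, 1 ≤ L p := hL_top.eventually (eventually_ge_atTop 1)
  have hup : ∀ᶠ p in atTop, (z p) ^ 2 ≤ 2 * L p := by
    filter_upwards [hzle, eventually_ge_atTop 2] with p hpz hp2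
    have hz0 : z p < 0 := by linarith
    have h1 : α / (α + p) ≤ stdNormalPDF (z p) / (-z p) := by
      rw [← hΦ p hp2]; exact cdf_le (z p) hz0
    have h2 : stdNormalPDF (z p) / (-z p) ≤ stdNormalPDF (z p) :=
      div_le_self (pdf_pos _).le (by linarith)
    have hsqrt1 : (1:ℝ) ≤ Real.sqrt (2 * Real.pi) := by
      rw [show (1:ℝ) = Real.sqrt 1 by simp]
      exact Real.sqrt_le_sqrt (by nlinarith [Real.pi_gt_three])
    have h3 : stdNormalPDF (z p) ≤ Real.exp (-(z p) ^ 2 / 2) := by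
      unfold stdNormalPDF
      calc (Real.sqrt (2 * Real.pi))⁻¹ * Real.exp (-(z p) ^ 2 / 2)
          ≤ 1 * Real.exp (-(z p) ^ 2 / 2) :=
            mul_le_mul_of_nonneg_right (inv_le_one_of_one_le₀ hsqrt1) (Real.exp_pos _).le
        _ = Real.exp (-(z p) ^ 2 / 2) := one_mul _
    have h4 : Real.exp (-(L p)) ≤ Real.exp (-(z p) ^ 2 / 2) := by
      rw [hexpL p]; exact le_trans h1 (le_trans h2 h3)
    have h5 := Real.exp_le_exp.1 h4
    linarith
  have hlo : ∀ᶠ p in atTop, 2 * L p - 2 * Real.log (12 * L p) ≤ (z p) ^ 2 := by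
    filter_upwards [hzle, eventually_ge_atTop 2, hL1, hup] with p hpz hp2 hL1p hupp
    have hz0 : z p < 0 := by linarith
    have hz2 : 1 ≤ (z p) ^ 2 := by nlinarith
    have hpdf := pdf_pos (z p)
    have h12L : (0:ℝ) < 12 * L p := by linarith
    have h1 : stdNormalPDF (z p) / (2 * (z p) ^ 2) ≤ α / (α + p) := by
      rw [← hΦ p hp2]
      refine le_trans ?_ (cdf_ge (z p))
      rw [div_le_div_iff₀ (by positivity) (by positivity)]
      nlinarith [mul_le_mul_of_nonneg_left hz2 hpdf.le,
        mul_le_mul_of_nonneg_right (show (1:ℝ) ≤ -z p by linarith)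
          (mul_pos hpdf (by positivity : (0:ℝ) < 2 * z p ^ 2)).le]
    have hsqrt3 : Real.sqrt (2 * Real.pi) ≤ 3 := by
      rw [show (3:ℝ) = Real.sqrt 9 by
        rw [show (9:ℝ) = 3 ^ 2 by norm_num, Real.sqrt_sq (by norm_num : (0:ℝ) ≤ 3)]]
      exact Real.sqrt_le_sqrt (by nlinarith [Real.pi_le_four])
    have hc : (3:ℝ)⁻¹ ≤ (Real.sqrt (2 * Real.pi))⁻¹ := by
      apply inv_anti₀ sqrt2pi_pos hsqrt3
    have h2 : Real.exp (-(z p) ^ 2 / 2) / 3 ≤ stdNormalPDF (z p) := by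
      unfold stdNormalPDF
      calc Real.exp (-(z p) ^ 2 / 2) / 3 = 3⁻¹ * Real.exp (-(z p) ^ 2 / 2) := by ring
        _ ≤ (Real.sqrt (2 * Real.pi))⁻¹ * Real.exp (-(z p) ^ 2 / 2) :=
            mul_le_mul_of_nonneg_right hc (Real.exp_pos _).le
    have h3 : Real.exp (-(z p) ^ 2 / 2) / (12 * L p)
        ≤ stdNormalPDF (z p) / (2 * (z p) ^ 2) := by
      have h6 : 6 * (z p) ^ 2 ≤ 12 * L p := by linarith
      have ha1 : Real.exp (-(z p) ^ 2 / 2) / (12 * L p)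
          ≤ Real.exp (-(z p) ^ 2 / 2) / (6 * (z p) ^ 2) := by
        gcongr
      refine le_trans ha1 ?_
      have heq : Real.exp (-(z p) ^ 2 / 2) / (6 * (z p) ^ 2)
          = (Real.exp (-(z p) ^ 2 / 2) / 3) / (2 * (z p) ^ 2) := by ring
      rw [heq]
      gcongr
    have h4 : Real.exp (-(z p) ^ 2 / 2 - Real.log (12 * L p)) ≤ Real.exp (-(L p)) := by
      rw [Real.exp_sub, Real.exp_log h12L, hexpL p]
      exact le_trans h3 h1
    have h5 := Real.exp_le_exp.1 h4
    linarith
  have hτ2_top : Tendsto (fun p => (tauP p) ^ 2) atTop atTop := by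
    refine (hlogp_top.const_mul_atTop two_pos).congr' ?_
    filter_upwards [eventually_ge_atTop 2] with p hp2
    exact (hτsq p hp2).symm
  have hlog12 : Tendsto (fun p => Real.log (12 * L p) / Real.log p) atTop (𝓝 0) := by
    have hA : Tendsto (fun p => Real.log (L p) / L p * (L p / Real.log p)) atTop (𝓝 0) := by
      simpa using (log_div_self_tendsto.comp hL_top).mul hLdiv
    have hB : Tendsto (fun p : ℕ => Real.log 12 / Real.log p) atTop (𝓝 0) :=
      tendsto_const_nhds.div_atTop hlogp_top
    have hC := hB.add hA
    rw [add_zero] at hC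
    refine hC.congr' ?_
    filter_upwards [hL1, eventually_ge_atTop 2] with p h1 h2
    have hLpos : 0 < L p := by linarith
    have hsplit : Real.log (12 * L p) = Real.log 12 + Real.log (L p) :=
      Real.log_mul (by norm_num) (ne_of_gt hLpos)
    rw [hsplit, add_div]
    congr 1
    rw [div_mul_div_comm, mul_comm (Real.log (L p)) (L p),
      mul_div_mul_left _ _ (ne_of_gt hLpos)]
  have hz2tend : Tendsto (fun p => (z p) ^ 2 / (tauP p) ^ 2) atTop (𝓝 1) := by
    have hlower := hLdiv.sub hlog12
    rw [sub_zero] at hlower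
    refine tendsto_of_tendsto_of_tendsto_of_le_of_le' hlower hLdiv ?_ ?_
    · filter_upwards [hlo, eventually_ge_atTop 2] with p hlop hp2
      have hp1 : (1:ℝ) < p := by exact_mod_cast Nat.lt_of_lt_of_le one_lt_two hp2
      have hlogp : 0 < Real.log p := Real.log_pos hp1
      rw [hτsq p hp2]
      have he1 : L p / Real.log p - Real.log (12 * L p) / Real.log p
          = (2 * L p - 2 * Real.log (12 * L p)) / (2 * Real.log p) := by
        field_simp
      rw [he1]
      gcongr
    · filter_upwards [hup, eventually_ge_atTop 2] with p hupp hp2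
      have hp1 : (1:ℝ) < p := by exact_mod_cast Nat.lt_of_lt_of_le one_lt_two hp2
      have hlogp : 0 < Real.log p := Real.log_pos hp1
      rw [hτsq p hp2]
      have he2 : L p / Real.log p = (2 * L p) / (2 * Real.log p) := by
        rw [mul_div_mul_left _ _ (two_ne_zero)]
      rw [he2]
      gcongr
  have ha_tend : Tendsto (fun p => z p / tauP p) atTop (𝓝 (-1)) := by
    have hs1 := hz2tend.sqrt
    rw [Real.sqrt_one] at hs1
    have hneg := hs1.neg
    refine hneg.congr' ?_
    filter_upwards [hzle, eventually_ge_atTop 2] with p hzp hp2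
    have hτ := hτpos p hp2
    have hzτneg : z p / tauP p < 0 := div_neg_of_neg_of_pos (by linarith) hτ
    rw [show (z p) ^ 2 / (tauP p) ^ 2 = (z p / tauP p) ^ 2 from (div_pow _ _ 2).symm,
      Real.sqrt_sq_eq_abs, abs_of_nonpos hzτneg.le, neg_neg]
  have hs_tend : Tendsto (fun p => σ p / tauP p) atTop (𝓝 1) := by
    have hinv : Tendsto (fun p => ((tauP p) ^ 2)⁻¹ + 1) atTop (𝓝 1) := by
      simpa using hτ2_top.inv_tendsto_atTop.add (tendsto_const_nhds (x := (1:ℝ)))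
    have hsq := hinv.sqrt
    rw [Real.sqrt_one] at hsq
    refine hsq.congr' ?_
    filter_upwards [eventually_ge_atTop 2] with p hp2
    have hτ := hτpos p hp2
    have heq : ((tauP p) ^ 2)⁻¹ + 1 = (1 + tauP p ^ 2) / (tauP p) ^ 2 := by
      field_simp
    rw [heq, Real.sqrt_div (by positivity) _, Real.sqrt_sq hτ.le]
  have hx2τ : Tendsto (fun p => x ^ 2 / (2 * (tauP p) ^ 2)) atTop (𝓝 0) :=
    tendsto_const_nhds.div_atTop (hτ2_top.const_mul_atTop two_pos)
  have hEnorm : Tendsto (fun p => -(z p / tauP p) ^ 2 / 2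
      + x * (z p / tauP p) * (σ p / tauP p) - x ^ 2 / (2 * (tauP p) ^ 2)) atTop
      (𝓝 (-(-1:ℝ) ^ 2 / 2 + x * (-1) * 1 - 0)) := by
    have t1 : Tendsto (fun p => -(z p / tauP p) ^ 2 / 2) atTop (𝓝 (-(-1:ℝ) ^ 2 / 2)) :=
      ((ha_tend.pow 2).neg).div_const 2
    have t2 : Tendsto (fun p => x * (z p / tauP p) * (σ p / tauP p)) atTop
        (𝓝 (x * (-1) * 1)) := (tendsto_const_nhds.mul ha_tend).mul hs_tend
    exact (t1.add t2).sub hx2τ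
  have hE : Tendsto (fun p => (z p) ^ 2 / 2 - (x - μ p) ^ 2 / (2 * (tauP p) ^ 2)) atTop
      (𝓝 (-1 / 2 - x)) := by
    have hval : (-(-1:ℝ) ^ 2 / 2 + x * (-1) * 1 - 0) = -1 / 2 - x := by ring
    rw [hval] at hEnorm
    refine hEnorm.congr' ?_
    filter_upwards [eventually_ge_atTop 2] with p hp2
    have hτ := hτpos p hp2
    have hσ := hσpos p
    rw [hμz p]
    have hexp : (x - z p * σ p) ^ 2
        = x ^ 2 - 2 * x * z p * σ p + (z p) ^ 2 * (σ p) ^ 2 := by ring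
    rw [hexp, hσsq p]
    field_simp
    ring
  have hmills := mills_tendsto (z := z) hz_bot
  have hexpE : Tendsto (fun p => Real.exp ((z p) ^ 2 / 2 - (x - μ p) ^ 2 / (2 * (tauP p) ^ 2)))
      atTop (𝓝 (Real.exp (-1 / 2 - x))) := (Real.continuous_exp.tendsto _).comp hE
  have hprod := (hexpE.mul (ha_tend.neg)).mul hmills
  have heq : (fun p => Real.exp ((z p) ^ 2 / 2 - (x - μ p) ^ 2 / (2 * (tauP p) ^ 2))
      * (-(z p / tauP p)) * (stdNormalPDF (z p) / (-z p * stdNormalCDF (z p))))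
      =ᶠ[atTop] (fun p : ℕ => ((α + p) / α) * mvpDens μ p x) := by
    filter_upwards [eventually_ge_atTop 2, hzle] with p hp2 hzp
    have hτ := hτpos p hp2
    have hΦp := hΦ p hp2
    have hΦpos := cdf_pos (z p)
    have hz0 : z p < 0 := by linarith
    have hover : (α + (p:ℝ)) / α = (stdNormalCDF (z p))⁻¹ := by rw [hΦp, inv_div]
    have hpdfz : stdNormalPDF (z p)
        = (Real.sqrt (2 * Real.pi))⁻¹ * (Real.exp ((z p) ^ 2 / 2))⁻¹ := by
      unfold stdNormalPDF
      rw [← Real.exp_neg]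
      congr 1
      ring
    have hpdfx : stdNormalPDF ((x - μ p) / tauP p)
        = (Real.sqrt (2 * Real.pi))⁻¹
          * (Real.exp ((x - μ p) ^ 2 / (2 * (tauP p) ^ 2)))⁻¹ := by
      unfold stdNormalPDF
      rw [← Real.exp_neg]
      congr 1
      rw [div_pow]
      ring
    unfold mvpDens
    rw [hover, Real.exp_sub, hpdfz, hpdfx]
    exact mvp_alg _ _ _ _ _ _ (Real.exp_ne_zero _) (Real.exp_ne_zero _) (cdf_pos _).ne'
      hτ.ne' hz0.ne sqrt2pi_pos.ne'
  have hfinal := Tendsto.congr' heq hprod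
  have hval2 : Real.exp (-1 / 2 - x) * -(-1:ℝ) * 1 = Real.exp (-x - 1 / 2) := by
    rw [show (-x - 1 / 2 : ℝ) = -1 / 2 - x by ring]
    ring
  rw [hval2] at hfinal
  exact hfinal
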